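/- arXiv:2403.03906 — 9 statements merged into one kernel-verified Lean document; each statement's English description precedes it below -/
import Mathlib

section
/- Let G be a strongly connected finite digraph and let S ⊆ A be a set of 'transferred' arcs such that every vertex v is 'locally acceptable': either all in-arcs of v lie in S, or no out-arc of v lies in S. If some arc of G lies in S, then every arc of G lies in S. -/
/-- The list of arcs (consecutive pairs) of a path given as a list of vertices. -/
def arcsOf {V : Type*} (p : List V) : List (V × V) := p.zip p.tail

/-- A directed cycle: a closed directed walk of length ≥ 1 with no repeated arcs. -/
def IsCycle {V : Type*} (A : Finset (V × V)) (p : List V) : Prop :=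
  p.Chain' (fun u v => (u, v) ∈ A) ∧ 2 ≤ p.length ∧ p.head? = p.getLast? ∧ (arcsOf p).Nodup

/-- Lengths of simple directed paths from `s` to `t`. -/
def SimplePathLens {V : Type*} (A : Finset (V × V)) (s t : V) : Set ℕ :=
  {n | ∃ p : List V, p.Chain' (fun u v => (u, v) ∈ A) ∧ p.Nodup ∧
        p.head? = some s ∧ p.getLast? = some t ∧ p.length = n + 1}

/-- In a strongly connected digraph, if every vertex is locally acceptable with respect
to the set S of transferred arcs, then S is all-or-nothing. -/
theorem stmt3 {V : Type*} [Fintype V] (A S : Finset (V × V)) (hSA : S ⊆ A)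
    (hsc : ∀ u v : V, Relation.ReflTransGen (fun a b => (a, b) ∈ A) u v)
    (hacc : ∀ v : V, (∀ u, (u, v) ∈ A → (u, v) ∈ S) ∨ (∀ w, (v, w) ∈ A → (v, w) ∉ S))
    (hne : ∃ a ∈ A, a ∈ S) :
    ∀ a ∈ A, a ∈ S := by
  obtain ⟨⟨u0, v0⟩, hA0, hS0⟩ := hne
  -- Q x : all in-arcs of x are in S
  have hQ0 : ∀ u, (u, u0) ∈ A → (u, u0) ∈ S := by
    rcases hacc u0 with h | h
    · exact h
    · exact absurd hS0 (h v0 hA0)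
  have key : ∀ x : V, Relation.ReflTransGen (fun a b => (a, b) ∈ A) x u0 →
      ∀ u, (u, x) ∈ A → (u, x) ∈ S := by
    intro x hx
    induction hx using Relation.ReflTransGen.head_induction_on with
    | refl => exact hQ0
    | head hab _ ih =>
      rename_i a b _
      rcases hacc a with h | h
      · exact h
      · exact absurd (ih a hab) (h b hab)
  rintro ⟨a, b⟩ hab
  exact key b (hsc b u0) a hab
end

section
/- Let G be a strongly connected finite digraph, C ⊆ V a set of vertices, and S ⊆ A a set of transferred arcs. Suppose every vertex outside C is locally acceptable with respect to S (all of its in-arcs are in S or none of its out-arcs are in S). If all in-arcs of C (arcs from V∖C into C) are in S, then all out-arcs of C (arcs from C to V∖C) are also in S. -/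
/-- Coalition case 1 (no Discount): if every vertex outside C is locally acceptable and
all in-arcs of C are transferred, then all out-arcs of C are transferred. -/
theorem stmt4 {V : Type*} [Fintype V] (A S : Finset (V × V)) (hSA : S ⊆ A) (C : Set V)
    (hsc : ∀ u v : V, Relation.ReflTransGen (fun a b => (a, b) ∈ A) u v)
    (hacc : ∀ v : V, v ∉ C →
      (∀ u, (u, v) ∈ A → (u, v) ∈ S) ∨ (∀ w, (v, w) ∈ A → (v, w) ∉ S))
    (hin : ∀ u v : V, (u, v) ∈ A → u ∉ C → v ∈ C → (u, v) ∈ S) :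
    ∀ u v : V, (u, v) ∈ A → u ∈ C → v ∉ C → (u, v) ∈ S := by
  intro u v huv huC hvC
  by_contra hnS
  -- v is locally acceptable; first disjunct would give (u,v) ∈ S, so no out-arc of v is in S
  have hv : ∀ w, (v, w) ∈ A → (v, w) ∉ S := by
    rcases hacc v hvC with h | h
    · exact absurd (h u huv) hnS
    · exact h
  -- invariant: every z reachable from v is outside C with no out-arc in S
  have key : ∀ z : V, Relation.ReflTransGen (fun a b => (a, b) ∈ A) v z →
      z ∉ C ∧ ∀ w, (z, w) ∈ A → (z, w) ∉ S := by
    intro z hz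
    induction hz with
    | refl => exact ⟨hvC, hv⟩
    | @tail b c hab hbc ih =>
      obtain ⟨hbC, hb⟩ := ih
      have hcC : c ∉ C := fun hcC => hb c hbc (hin b c hbc hbC hcC)
      refine ⟨hcC, ?_⟩
      rcases hacc c hcC with h | h
      · exact absurd (h b hbc) (hb c hbc)
      · exact h
  exact (key u (hsc v u)).1 huC
end

section
/- Let G be a strongly connected finite digraph, C ⊆ V, and S ⊆ A. Suppose every vertex outside C is locally acceptable with respect to S. If no out-arc of C is in S, then no in-arc of C is in S. -/
/-- Coalition case 2 (no FreeRide): if every vertex outside C is locally acceptable and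
no out-arc of C is transferred, then no in-arc of C is transferred. -/
theorem stmt5 {V : Type*} [Fintype V] (A S : Finset (V × V)) (hSA : S ⊆ A) (C : Set V)
    (hsc : ∀ u v : V, Relation.ReflTransGen (fun a b => (a, b) ∈ A) u v)
    (hacc : ∀ v : V, v ∉ C →
      (∀ u, (u, v) ∈ A → (u, v) ∈ S) ∨ (∀ w, (v, w) ∈ A → (v, w) ∉ S))
    (hout : ∀ u v : V, (u, v) ∈ A → u ∈ C → v ∉ C → (u, v) ∉ S) :
    ∀ u v : V, (u, v) ∈ A → u ∉ C → v ∈ C → (u, v) ∉ S := by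
  intro u v hA hu hv hS
  have key : ∀ x, Relation.ReflTransGen (fun a b => (a, b) ∈ A) v x → x ∉ C →
      ∀ w, (x, w) ∈ A → (x, w) ∈ S → False := by
    intro x hx
    induction hx with
    | refl => intro hvC; exact absurd hv hvC
    | @tail b c hvb arc ih =>
      intro hc w hcw hcwS
      have hall : ∀ z, (z, c) ∈ A → (z, c) ∈ S := by
        rcases hacc c hc with h | h
        · exact h
        · exact absurd hcwS (h w hcw)
      have hbc := hall b arc
      by_cases hb : b ∈ C
      · exact hout b c arc hb hc hbc
      · exact ih hb c arc hbc
  exact key u (hsc v u) hu v hA hS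
end

section
/- Let G be a finite digraph with bottleneck vertex ℓ, and let D* be the maximum length of a simple cycle in G. Define d⁻(v) = maximum length of a simple path from v to ℓ (d⁻(ℓ)=0). Then for every arc (u,v) with u ≠ ℓ, we have d⁻(u) ≥ d⁻(v) + 1; moreover max over out-neighbors z of ℓ of (d⁻(z)+1) = D*. -/
/-- Lengths of simple directed cycles: lists with head = last, no repeated vertices
except the endpoints, and n ≥ 1 arcs. -/
def SimpleCycleLens {V : Type*} (A : Finset (V × V)) : Set ℕ :=
  {n | ∃ p : List V, p.Chain' (fun u v => (u, v) ∈ A) ∧ p.head? = p.getLast? ∧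
        p.dropLast.Nodup ∧ p.length = n + 1 ∧ 1 ≤ n}

lemma mem_arcs_fst {V : Type*} : ∀ {p : List V} {x : V × V}, x ∈ arcsOf p → x.1 ∈ p.dropLast
  | [], x, h => by simp [arcsOf] at h
  | [a], x, h => by simp [arcsOf] at h
  | a :: b :: t, x, h => by
    simp only [arcsOf, List.zip, List.tail_cons, List.zipWith_cons_cons, List.mem_cons] at h
    rcases h with h | h
    · subst h; simp
    · have := mem_arcs_fst (p := b :: t) (x := x) h
      simp only [List.dropLast_cons₂, List.mem_cons]
      right; exact this

lemma arcs_nodup {V : Type*} : ∀ {p : List V}, p.dropLast.Nodup → (arcsOf p).Nodup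
  | [], _ => by simp [arcsOf]
  | [a], _ => by simp [arcsOf]
  | a :: b :: t, h => by
    simp only [List.dropLast_cons₂, List.nodup_cons] at h
    have ih := arcs_nodup (p := b :: t) h.2
    simp only [arcsOf, List.zip, List.tail_cons, List.zipWith_cons_cons, List.nodup_cons]
    refine ⟨fun hm => ?_, ih⟩
    exact h.1 (mem_arcs_fst (p := b :: t) hm)

lemma chain_rot {V : Type*} {R : V → V → Prop} (a b : List V) (l x : V)
    (hx : (a ++ l :: b).head? = some x)
    (h : List.Chain' R ((a ++ l :: b) ++ [x])) :
    List.Chain' R ((l :: b) ++ (a ++ [l])) := by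
  rcases List.isChain_append.1 h with ⟨h1, -, h2⟩
  rcases List.isChain_append.1 h1 with ⟨ha, hlb, hal⟩
  refine List.isChain_append.2 ⟨hlb, List.isChain_append.2 ⟨ha, List.isChain_singleton l, ?_⟩, ?_⟩
  · intro y hy z hz
    simp at hz; subst hz
    exact hal y hy l (by simp)
  · intro y hy z hz
    have hy' : y ∈ ((a ++ l :: b)).getLast? := by
      rw [List.getLast?_append]
      simp only [List.getLast?_cons] at hy ⊢
      simp [hy]
    have := h2 y hy' x (by simp)
    cases a with
    | nil =>
      simp at hx; subst hx
      simp at hz; subst hz; exact this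
    | cons a0 a' =>
      simp at hx
      simp at hz
      rw [← hx, hz] at this
      exact this

lemma no_revisit {V : Type*} (A : Finset (V × V)) (l : V)
    (hbot : ∀ p : List V, IsCycle A p → l ∈ p)
    {p : List V} {u v : V}
    (hc : p.Chain' (fun a b => (a, b) ∈ A)) (hn : p.Nodup)
    (hh : p.head? = some v) (hl : p.getLast? = some l)
    (hA : (u, v) ∈ A) (hu : u ≠ l) (hv : v ≠ l) : u ∉ p := by
  intro hmem
  obtain ⟨s, t, rfl⟩ := List.append_of_mem hmem
  have hs : (s ++ u :: t) = (s ++ [u]) ++ t := by simp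
  cases t with
  | nil =>
    rw [List.getLast?_append] at hl
    simp at hl
    exact hu hl
  | cons t0 t' =>
    have hlt : l ∈ t0 :: t' := by
      rw [hs, List.getLast?_append] at hl
      cases hw : (t0 :: t').getLast? with
      | none => simp at hw
      | some w =>
        rw [hw] at hl
        simp at hl
        subst hl
        obtain ⟨h1, h2⟩ := List.mem_getLast?_eq_getLast
          (show w ∈ (t0 :: t').getLast? from by rw [hw]; rfl)
        rw [h2]
        exact List.getLast_mem h1
    have hhv : (s ++ [u]).head? = some v := by
      cases s with
      | nil => simpa using hh
      | cons s0 s' => simpa using hh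
    have hcyc : IsCycle A ((s ++ [u]) ++ [v]) := by
      refine ⟨?_, by simp, ?_, ?_⟩
      · refine List.isChain_append.2 ⟨?_, List.isChain_singleton v, ?_⟩
        · rw [hs] at hc
          exact (List.isChain_append.1 hc).1
        · intro y hy z hz
          simp at hz
          subst hz
          rw [List.getLast?_append] at hy
          simp at hy
          rw [← hy]
          exact hA
      · rw [List.head?_append, hhv, List.getLast?_append]
        simp
      · apply arcs_nodup
        rw [List.dropLast_concat]
        rw [hs, List.nodup_append] at hn
        exact hn.1
    have hlq := hbot _ hcyc
    simp only [List.append_assoc, List.cons_append, List.nil_append, List.mem_append,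
      List.mem_cons, List.not_mem_nil, or_false] at hlq
    rw [hs, List.nodup_append] at hn
    rcases hlq with hls | hlu | hlv
    · exact hn.2.2 l (by simp [hls]) l hlt rfl
    · exact hu hlu.symm
    · exact hv hlv.symm

/-- In a bottleneck digraph, the max-distance-to-the-bottleneck function decreases along
arcs, and the maximum over out-neighbors of the bottleneck equals the maximum simple
cycle length. -/
theorem stmt8 {V : Type*} [Fintype V] (A : Finset (V × V)) (l : V)
    (hsc : ∀ u v : V, Relation.ReflTransGen (fun a b => (a, b) ∈ A) u v)
    (hbot : ∀ p : List V, IsCycle A p → l ∈ p)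
    (Dstar : ℕ) (hD : IsGreatest (SimpleCycleLens A) Dstar)
    (dm : V → ℕ) (hdm0 : dm l = 0)
    (hdm : ∀ v : V, v ≠ l → IsGreatest (SimplePathLens A v l) (dm v)) :
    (∀ u v : V, (u, v) ∈ A → u ≠ l → dm v + 1 ≤ dm u) ∧
      IsGreatest {m | ∃ z : V, (l, z) ∈ A ∧ m = dm z + 1} Dstar := by
  have part1 : ∀ u v : V, (u, v) ∈ A → u ≠ l → dm v + 1 ≤ dm u := by
    intro u v hA hu
    by_cases hv : v = l
    · subst hv
      have hmem : (1 : ℕ) ∈ SimplePathLens A u v := by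
        refine ⟨[u, v], ?_, by simp [hu], rfl, rfl, rfl⟩
        exact List.isChain_cons_cons.2 ⟨hA, List.isChain_singleton v⟩
      have := (hdm u hu).2 hmem
      omega
    · obtain ⟨p, hc, hn, hh, hl, hlen⟩ := (hdm v hv).1
      have hup : u ∉ p := no_revisit A l hbot hc hn hh hl hA hu hv
      have hmem : dm v + 1 ∈ SimplePathLens A u l := by
        refine ⟨u :: p, ?_, List.nodup_cons.2 ⟨hup, hn⟩, rfl, ?_, by simp [hlen]⟩
        · apply List.isChain_cons.2
          refine ⟨fun y hy => ?_, hc⟩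
          rw [hh] at hy
          simp at hy
          rw [← hy]
          exact hA
        · rw [show u :: p = [u] ++ p from rfl, List.getLast?_append, hl]
          rfl
      exact (hdm u hu).2 hmem
  have hDpos : 1 ≤ Dstar := by
    obtain ⟨p, -, -, -, -, h1⟩ := hD.1
    exact h1
  have hub : ∀ m ∈ {m | ∃ z : V, (l, z) ∈ A ∧ m = dm z + 1}, m ≤ Dstar := by
    rintro m ⟨z, hz, rfl⟩
    by_cases hzl : z = l
    · subst hzl
      rw [hdm0]
      exact hDpos
    · obtain ⟨p, hc, hn, hh, hl, hlen⟩ := (hdm z hzl).1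
      have hpne : p ≠ [] := by
        intro h; rw [h] at hh; simp at hh
      have hnotin : l ∉ p.dropLast := by
        obtain ⟨h1, h2⟩ := List.mem_getLast?_eq_getLast
          (show l ∈ p.getLast? from by rw [hl]; rfl)
        have hdp : p = p.dropLast ++ [l] := by
          conv_lhs => rw [← List.dropLast_append_getLast h1]
          rw [← h2]
        intro hmem
        rw [hdp, List.nodup_append] at hn
        exact hn.2.2 l hmem l (by simp) rfl
      have hmem : dm z + 1 ∈ SimpleCycleLens A := by
        refine ⟨l :: p, ?_, ?_, ?_, by simp [hlen], by omega⟩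
        · apply List.isChain_cons.2
          refine ⟨fun y hy => ?_, hc⟩
          rw [hh] at hy
          simp at hy
          rw [← hy]
          exact hz
        · rw [show l :: p = [l] ++ p from rfl, List.getLast?_append, hl]
          rfl
        · rw [show l :: p = [l] ++ p from rfl, List.dropLast_append_of_ne_nil hpne]
          exact List.nodup_cons.2 ⟨hnotin, hn.sublist (List.dropLast_sublist p)⟩
      exact hD.2 hmem
  refine ⟨part1, ?_, hub⟩
  -- Dstar is attained
  obtain ⟨p, hc, hhl, hnd, hlen, -⟩ := hD.1
  have hpne : p ≠ [] := by
    intro h; rw [h] at hlen; simp at hlen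
  have hcyc : IsCycle A p := ⟨hc, by omega, hhl, arcs_nodup hnd⟩
  have hlp := hbot p hcyc
  obtain ⟨x, hx⟩ : ∃ x, p.head? = some x := ⟨p.head hpne, List.head?_eq_head hpne⟩
  have hplast : p.getLast? = some x := by rw [← hhl, hx]
  obtain ⟨hne', hxl⟩ := List.mem_getLast?_eq_getLast
    (show x ∈ p.getLast? from by rw [hplast]; rfl)
  have hdp : p = p.dropLast ++ [x] := by
    conv_lhs => rw [← List.dropLast_append_getLast hne']
    rw [← hxl]
  have hdlen : p.dropLast.length = Dstar := by
    rw [List.length_dropLast, hlen]; rfl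
  have hdne : p.dropLast ≠ [] := by
    intro h; rw [h] at hdlen; simp at hdlen; omega
  have hhead : p.dropLast.head? = some x := by
    rw [← hx]
    conv_rhs => rw [hdp]
    rw [List.head?_append]
    cases hw : p.dropLast.head? with
    | none => exact absurd (List.head?_eq_none_iff.1 hw) hdne
    | some w => rfl
  have hld : l ∈ p.dropLast := by
    rw [hdp] at hlp
    rcases List.mem_append.1 hlp with h | h
    · exact h
    · simp at h
      subst h
      obtain ⟨w, hw⟩ : ∃ w, p.dropLast.head? = some w := ⟨_, List.head?_eq_head hdne⟩
      rw [hhead] at hw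
      cases hw
      exact List.mem_of_mem_head? (by rw [hhead]; rfl)
  obtain ⟨a, b, hab⟩ := List.append_of_mem hld
  have hx' : (a ++ l :: b).head? = some x := by rw [← hab]; exact hhead
  have hchain2 : List.Chain' (fun u v => (u, v) ∈ A) ((l :: b) ++ (a ++ [l])) := by
    refine chain_rot a b l x hx' ?_
    rw [← hab, ← hdp]
    exact hc
  have hq : (l :: b) ++ (a ++ [l]) = l :: (b ++ (a ++ [l])) := by simp
  rw [hq] at hchain2
  obtain ⟨hlink, hcq⟩ := List.isChain_cons.1 hchain2
  have hqne : (b ++ (a ++ [l])) ≠ [] := by simp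
  obtain ⟨z, hzq⟩ : ∃ z, (b ++ (a ++ [l])).head? = some z := ⟨_, List.head?_eq_head hqne⟩
  have hlz : (l, z) ∈ A := hlink z hzq
  have hdn : (a ++ l :: b).Nodup := by rw [← hab]; exact hnd
  rw [List.nodup_append] at hdn
  obtain ⟨hna, hnlb, hdis⟩ := hdn
  rw [List.nodup_cons] at hnlb
  have hla : l ∉ a := fun h => hdis l h l (by simp) rfl
  have hlenq : (b ++ (a ++ [l])).length = Dstar := by
    have := hdlen
    rw [hab] at this
    simp at this ⊢
    omega
  have hql : (b ++ (a ++ [l])).getLast? = some l := by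
    rw [List.getLast?_append, List.getLast?_append]
    rfl
  by_cases hzl : z = l
  · have hb : b = [] := by
      cases b with
      | nil => rfl
      | cons b0 b' =>
        simp at hzq
        exact absurd (show l ∈ b0 :: b' by rw [hzq, hzl]; simp) hnlb.1
    subst hb
    have ha : a = [] := by
      cases a with
      | nil => rfl
      | cons a0 a' =>
        simp at hzq
        exact absurd (show l ∈ a0 :: a' by rw [hzq, hzl]; simp) hla
    subst ha
    simp at hlenq
    refine ⟨z, hlz, ?_⟩
    rw [hzl, hdm0]
    omega
  · have hqn : (b ++ (a ++ [l])).Nodup := by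
      rw [List.nodup_append, List.nodup_append]
      refine ⟨hnlb.2, ⟨hna, List.nodup_singleton l, ?_⟩, ?_⟩
      · intro y hy w hz'
        simp at hz'
        subst hz'
        intro hyw
        exact absurd (hyw ▸ hy) hla
      · intro y hy w h hyw
        subst hyw
        rcases List.mem_append.1 h with h' | h'
        · exact hdis y h' y (by simp [hy]) rfl
        · simp at h'
          subst h'
          exact hnlb.1 hy
    have hm : Dstar - 1 ∈ SimplePathLens A z l :=
      ⟨b ++ (a ++ [l]), hcq, hqn, hzq, hql, by omega⟩
    have h1' := (hdm z hzl).2 hm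
    have h2' := hub (dm z + 1) ⟨z, hlz, rfl⟩
    exact ⟨z, hlz, by omega⟩
end

section
/- Let G be a finite digraph, f : A → V a protector labeling. Suppose for every vertex v and every party x ≠ v: if v has an in-arc protected by x then every arc incident to v not protected by v is protected by x (uniqueness of external protector). Let P = u1,...,uk be a simple directed path whose last arc (u_{k-1}, u_k) is protected by some z ∉ {u_1,...,u_{k-1}}, and suppose each arc on P other than the last is either protected by its own buyer or by the protector of the following arc's constraint. Then: for each i, the arc (u_i, u_{i+1}) is protected by one of u_{i+1}, ..., u_{k-1}, z; consequently no arc of P is protected by its seller. -/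
/-- Along a simple path whose last arc is protected by a party z not among the earlier
vertices, every arc is protected by a later internal vertex or z; hence no arc is
protected by its seller. -/
theorem stmt9 {V : Type*} [Fintype V] (A : Finset (V × V)) (f : V × V → V)
    (hA2 : ∀ v x : V, x ≠ v → (∃ u, (u, v) ∈ A ∧ f (u, v) = x) →
      ∀ a ∈ A, (a.1 = v ∨ a.2 = v) → f a ≠ v → f a = x)
    (k : ℕ) (hk : 1 ≤ k) (u : ℕ → V)
    (harcs : ∀ i < k, (u i, u (i + 1)) ∈ A)
    (hsimple : ∀ i j, i ≤ k → j ≤ k → u i = u j → i = j)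
    (z : V) (hz : f (u (k - 1), u k) = z) (hznotin : ∀ i < k, z ≠ u i) :
    ∀ i < k,
      (f (u i, u (i + 1)) = z ∨ ∃ j, i < j ∧ j < k ∧ f (u i, u (i + 1)) = u j) ∧
        f (u i, u (i + 1)) ≠ u i := by
  suffices H : ∀ d i, i + d + 1 = k →
      (f (u i, u (i + 1)) = z ∨ ∃ j, i < j ∧ j < k ∧ f (u i, u (i + 1)) = u j) ∧
        f (u i, u (i + 1)) ≠ u i by
    intro i hi
    exact H (k - i - 1) i (by omega)
  intro d
  induction d with
  | zero =>
    intro i hi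
    have e1 : u i = u (k - 1) := by rw [show i = k - 1 by omega]
    have e2 : u (i + 1) = u k := by rw [show i + 1 = k by omega]
    have hzi : z ≠ u i := hznotin i (by omega)
    refine ⟨Or.inl ?_, ?_⟩
    · rw [e1, e2, hz]
    · rw [e1, e2, hz]; rw [e1] at hzi; exact hzi
  | succ d ih =>
    intro i hi
    obtain ⟨hx, hxne⟩ := ih (i + 1) (by omega)
    by_cases hb : f (u i, u (i + 1)) = u (i + 1)
    · refine ⟨Or.inr ⟨i + 1, by omega, by omega, hb⟩, ?_⟩
      rw [hb]
      intro heq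
      have := hsimple (i + 1) i (by omega) (by omega) heq
      omega
    · have key := hA2 (u (i + 1)) (f (u i, u (i + 1))) hb
        ⟨u i, harcs i (by omega), rfl⟩ (u (i + 1), u (i + 2)) (harcs (i + 1) (by omega))
        (Or.inl rfl) hxne
      rcases hx with h | ⟨j, hj1, hj2, hj3⟩
      · have hy : f (u i, u (i + 1)) = z := by rw [← key]; exact h
        exact ⟨Or.inl hy, by rw [hy]; exact hznotin i (by omega)⟩
      · have hy : f (u i, u (i + 1)) = u j := by rw [← key]; exact hj3
        refine ⟨Or.inr ⟨j, by omega, hj2, hy⟩, ?_⟩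
        rw [hy]
        intro heq
        have := hsimple j i (by omega) (by omega) heq
        omega
end

section
/- Let G be a finite digraph with protector labeling f satisfying: for every vertex w ≠ v, if w has an in-arc protected by v then w has an out-arc protected by v; and the subgraph of arcs protected by v restricted to V∖{v} is acyclic. Then if vertex v has any out-arc protected by v, there exists a directed path from the head of that arc back to v all of whose arcs are protected by v. -/
lemma arcsOf_map_snd {V : Type*} (p : List V) : (arcsOf p).map Prod.snd = p.tail := by
  unfold arcsOf
  exact List.map_snd_zip (by cases p <;> simp)

lemma stmt11_aux {V : Type*} [Fintype V] (A : Finset (V × V)) (f : V × V → V) (v : V)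
    (hstep : ∀ w : V, w ≠ v → (∃ u, (u, w) ∈ A ∧ f (u, w) = v) →
      ∃ y, (w, y) ∈ A ∧ f (w, y) = v)
    (hacyc : ¬ ∃ p : List V,
      (p.Chain' (fun a b => (a, b) ∈ A ∧ f (a, b) = v) ∧ 2 ≤ p.length ∧
        p.head? = p.getLast? ∧ (arcsOf p).Nodup) ∧ v ∉ p) :
    ∀ n : ℕ, ∀ p : List V, Fintype.card V - p.length ≤ n → p ≠ [] → p.Nodup →
      v ∉ p → p.Chain' (fun a b => (a, b) ∈ A ∧ f (a, b) = v) →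
      (∃ x, p.getLast? = some x ∧ ∃ u, (u, x) ∈ A ∧ f (u, x) = v) →
      ∃ q : List V, q ≠ [] ∧ q.head? = p.head? ∧ q.getLast? = some v ∧
        q.Chain' (fun a b => (a, b) ∈ A ∧ f (a, b) = v) := by
  classical
  intro n
  induction n with
  | zero =>
    intro p hcard hne hnd hvp _ _
    exfalso
    have h1 : (v :: p).Nodup := List.nodup_cons.2 ⟨hvp, hnd⟩
    have h2 : (v :: p).length ≤ Fintype.card V := h1.length_le_card
    simp only [List.length_cons] at h2
    omega
  | succ n ih =>
    intro p hcard hne hnd hvp hchain hin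
    obtain ⟨x, hxlast, u, hu, hfu⟩ := hin
    have hxp : x ∈ p := List.mem_of_mem_getLast? hxlast
    have hxv : x ≠ v := fun h => hvp (h ▸ hxp)
    obtain ⟨y, hy, hfy⟩ := hstep x hxv ⟨u, hu, hfu⟩
    by_cases hyv : y = v
    · -- done: append v
      refine ⟨p ++ [v], by simp, ?_, ?_, ?_⟩
      · cases p with
        | nil => exact absurd rfl hne
        | cons a t => simp
      · simp [List.getLast?_append]
      · show List.IsChain _ _; rw [List.isChain_append]
        refine ⟨hchain, List.isChain_singleton _, ?_⟩
        intro a ha b hb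
        rw [hxlast] at ha
        simp only [Option.mem_def, Option.some.injEq] at ha
        simp only [List.head?_cons, Option.mem_def, Option.some.injEq] at hb
        subst ha; subst hb
        exact ⟨hyv ▸ hy, hyv ▸ hfy⟩
    · by_cases hyp : y ∈ p
      · -- cycle: contradiction
        exfalso
        obtain ⟨s, t, hst⟩ := List.append_of_mem hyp
        apply hacyc
        refine ⟨(y :: t) ++ [y], ⟨?_, by simp, ?_, ?_⟩, ?_⟩
        · show List.IsChain _ _; rw [List.isChain_append]
          refine ⟨List.IsChain.suffix hchain ⟨s, hst.symm⟩, List.isChain_singleton _, ?_⟩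
          intro a ha b hb
          have hlast : (y :: t).getLast? = some x := by
            have := hxlast
            rw [hst, List.getLast?_append] at this
            cases h : (y :: t).getLast? with
            | none => simp at h
            | some z => rw [h] at this; simp at this; exact congrArg some this
          rw [hlast] at ha
          simp only [Option.mem_def, Option.some.injEq] at ha
          simp only [List.head?_cons, Option.mem_def, Option.some.injEq] at hb
          subst ha; subst hb
          exact ⟨hy, hfy⟩
        · rw [List.getLast?_concat]; rfl
        · have : ((y :: t) ++ [y]).tail.Nodup := by
            have h1 : (y :: t).Nodup := by
              have := hst ▸ hnd
              exact (List.nodup_append.1 this).2.1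
            simp only [List.cons_append, List.tail_cons]
            rw [List.nodup_append]
            refine ⟨(List.nodup_cons.1 h1).2, List.nodup_singleton _, ?_⟩
            intro a ha
            simp only [List.mem_singleton]
            intro b hb h; subst hb; subst h
            exact (List.nodup_cons.1 h1).1 ha
          have hmap := arcsOf_map_snd ((y :: t) ++ [y])
          exact List.Nodup.of_map Prod.snd (hmap ▸ this)
        · intro hv
          simp only [List.cons_append, List.mem_cons, List.mem_append, List.mem_singleton] at hv
          have hyv' : v ≠ y := fun h => hvp (h ▸ hyp)
          rcases hv with h | h | h | h
          · exact hyv' h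
          · exact hvp (hst ▸ (List.mem_append.2 (Or.inr (List.mem_cons_of_mem _ h))))
          · exact hyv' h
          · simp at h
      · -- extend
        have hchain' : (p ++ [y]).Chain' (fun a b => (a, b) ∈ A ∧ f (a, b) = v) := by
          show List.IsChain _ _; rw [List.isChain_append]
          refine ⟨hchain, List.isChain_singleton _, ?_⟩
          intro a ha b hb
          rw [hxlast] at ha
          simp only [Option.mem_def, Option.some.injEq] at ha
          simp only [List.head?_cons, Option.mem_def, Option.some.injEq] at hb
          subst ha; subst hb
          exact ⟨hy, hfy⟩
        obtain ⟨q, hq1, hq2, hq3, hq4⟩ := ih (p ++ [y])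
          (by simp only [List.length_append, List.length_singleton]; omega)
          (by simp)
          (by rw [List.nodup_append]; exact ⟨hnd, List.nodup_singleton _, fun a ha => by
                simp only [List.mem_singleton]; intro b hb h; subst hb; subst h; exact hyp ha⟩)
          (by intro h; rcases List.mem_append.1 h with h | h
              · exact hvp h
              · exact hyv (List.mem_singleton.1 h).symm)
          hchain'
          ⟨y, by simp [List.getLast?_append], x, hy, hfy⟩
        refine ⟨q, hq1, ?_, hq3, hq4⟩
        rw [hq2]
        cases p with
        | nil => exact absurd rfl hne
        | cons a t => simp

/-- If v has an out-arc protected by v, then there is a directed path from the head of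
that arc back to v all of whose arcs are protected by v. -/
theorem stmt11 {V : Type*} [Fintype V] (A : Finset (V × V)) (f : V × V → V) (v : V)
    (hstep : ∀ w : V, w ≠ v → (∃ u, (u, w) ∈ A ∧ f (u, w) = v) →
      ∃ y, (w, y) ∈ A ∧ f (w, y) = v)
    (hacyc : ¬ ∃ p : List V,
      (p.Chain' (fun a b => (a, b) ∈ A ∧ f (a, b) = v) ∧ 2 ≤ p.length ∧
        p.head? = p.getLast? ∧ (arcsOf p).Nodup) ∧ v ∉ p)
    (w : V) (hw : (v, w) ∈ A) (hfw : f (v, w) = v) :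
    ∃ p : List V, p ≠ [] ∧ p.head? = some w ∧ p.getLast? = some v ∧
      p.Chain' (fun a b => (a, b) ∈ A ∧ f (a, b) = v) := by
  by_cases hwv : w = v
  · subst hwv
    exact ⟨[w], by simp, rfl, rfl, List.isChain_singleton _⟩
  · obtain ⟨q, hq1, hq2, hq3, hq4⟩ := stmt11_aux A f v hstep hacyc (Fintype.card V) [w]
      (by simp) (by simp) (by simp) (by simpa using Ne.symm hwv) (List.isChain_singleton _)
      ⟨w, rfl, v, hw, hfw⟩
    exact ⟨q, hq1, hq2, hq3, hq4⟩
end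

section
/- Let G be a finite digraph with protector labeling f satisfying: for every vertex v, if v has an in-arc protected by x ≠ v then every arc incident to v is protected by v or by x. Let (u,v) be an arc protected by x with x ≠ v, and let P be a directed path starting with arc (u,v), not containing x as an internal vertex, on which every arc is not protected by its seller. Then every arc of P is protected by x. -/
/-- Protection propagates forward along seller-unprotected paths avoiding x: if the first
arc is protected by x, every arc of the path is protected by x. -/
theorem stmt13 {V : Type*} [Fintype V] (A : Finset (V × V)) (f : V × V → V)
    (hA2 : ∀ v x : V, x ≠ v → (∃ u, (u, v) ∈ A ∧ f (u, v) = x) →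
      ∀ a ∈ A, (a.1 = v ∨ a.2 = v) → (f a = v ∨ f a = x))
    (x u v : V) (q : List V)
    (hx : f (u, v) = x) (hxv : x ≠ v)
    (hchain : (u :: v :: q).Chain' (fun a b => (a, b) ∈ A))
    (hnosell : ∀ a ∈ arcsOf (u :: v :: q), f a ≠ a.1)
    (hinternal : x ∉ (v :: q).dropLast) :
    ∀ a ∈ arcsOf (u :: v :: q), f a = x := by
  induction q generalizing u v with
  | nil =>
    intro a ha
    simp only [arcsOf, List.zip, List.tail, List.zipWith, List.mem_singleton] at ha
    subst ha; exact hx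
  | cons w q' ih =>
    have huvA : (u, v) ∈ A := (List.isChain_cons_cons.mp hchain).1
    have hchain' : (v :: w :: q').Chain' (fun a b => (a, b) ∈ A) :=
      (List.isChain_cons_cons.mp hchain).2
    have hvwA : (v, w) ∈ A := (List.isChain_cons_cons.mp hchain').1
    have harcs : arcsOf (u :: v :: w :: q') = (u, v) :: arcsOf (v :: w :: q') := rfl
    have hfvw : f (v, w) = x := by
      rcases hA2 v x hxv ⟨u, huvA, hx⟩ (v, w) hvwA (Or.inl rfl) with h | h
      · exact absurd h (hnosell (v, w) (by simp [arcsOf]))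
      · exact h
    intro a ha
    rw [harcs, List.mem_cons] at ha
    rcases ha with rfl | ha
    · exact hx
    · cases q' with
      | nil =>
        simp only [arcsOf, List.zip, List.tail, List.zipWith, List.mem_singleton] at ha
        subst ha; exact hfvw
      | cons y q'' =>
        have hxw : x ≠ w := by
          intro h; apply hinternal
          simp [List.dropLast, h]
        refine ih v w hfvw hxw hchain' ?_ ?_ a ha
        · intro b hb
          exact hnosell b (by rw [harcs]; exact List.mem_cons_of_mem _ hb)
        · intro h; apply hinternal
          simp only [List.dropLast] at h ⊢
          exact List.mem_cons_of_mem _ h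
end

section
/- Let G be a finite digraph with protector labeling f satisfying the local axioms: (A1) no directed cycle has all arcs unprotected by their sellers; (A2) for each vertex v with an in-arc protected by x ≠ v, all arcs incident to v are protected by v or x; (A3) for each v, x: v has an in-arc protected by x iff v has an out-arc protected by x. Let P = u_1,...,u_{p+1} be a simple path with u_1 = x and the last arc protected by x. Then every arc of P is protected by x. -/

lemma length_arcsOf {V : Type*} (p : List V) : (arcsOf p).length = p.length - 1 := by
  simp [arcsOf]

lemma getElem_arcsOf {V : Type*} (p : List V) (i : ℕ) (h : i < (arcsOf p).length) :
    (arcsOf p)[i] = (p[i]'(by simp [length_arcsOf] at h; omega),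
      p[i+1]'(by simp [length_arcsOf] at h; omega)) := by
  simp [arcsOf, List.getElem_zip, List.getElem_tail]

lemma mem_arcsOf {V : Type*} {p : List V} {b : V × V} :
    b ∈ arcsOf p ↔ ∃ i : ℕ, ∃ h : i + 1 < p.length,
      b = (p[i]'(by omega), p[i+1]'h) := by
  rw [List.mem_iff_getElem]
  constructor
  · rintro ⟨i, h, rfl⟩
    exact ⟨i, by simp [length_arcsOf] at h; omega, getElem_arcsOf p i h⟩
  · rintro ⟨i, h, rfl⟩
    exact ⟨i, by simp [length_arcsOf]; omega, getElem_arcsOf p i (by simp [length_arcsOf]; omega)⟩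

lemma chain'_iff_arcs {V : Type*} {R : V → V → Prop} {p : List V} :
    p.Chain' R ↔ ∀ b ∈ arcsOf p, R b.1 b.2 := by
  show List.IsChain R p ↔ _
  rw [List.isChain_iff_getElem]
  constructor
  · intro h b hb
    obtain ⟨i, hi, rfl⟩ := mem_arcsOf.mp hb
    simpa using h i (by omega)
  · intro h i hi
    have := h _ (mem_arcsOf.mpr ⟨i, by omega, rfl⟩)
    simpa using this

/-- split a list with a duplicate -/
lemma dup_split {α : Type*} : ∀ {l : List α}, ¬ l.Nodup →
    ∃ (l1 : List α) (v : α) (l2 l3 : List α), l = l1 ++ v :: l2 ++ v :: l3 := by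
  intro l h
  induction l with
  | nil => simp at h
  | cons a l ih =>
    rw [List.nodup_cons] at h
    push_neg at h
    by_cases ha : a ∈ l
    · obtain ⟨s, t, rfl⟩ := List.append_of_mem ha
      exact ⟨[], a, s, t, rfl⟩
    · obtain ⟨l1, v, l2, l3, rfl⟩ := ih (h ha)
      exact ⟨a :: l1, v, l2, l3, rfl⟩

/-- extract a closed walk with nodup dropLast from any closed walk -/
lemma extract_cycle {α : Type*} (R : α → α → Prop) :
    ∀ (n : ℕ) (q : List α), q.length ≤ n → q.Chain' R → q.head? = q.getLast? →
      2 ≤ q.length →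
    ∃ c : List α, c.Chain' R ∧ c.head? = c.getLast? ∧ 2 ≤ c.length ∧ c.dropLast.Nodup := by
  intro n
  induction n with
  | zero => intro q hq _ _ h2; omega
  | succ n ih =>
    intro q hq hc hcl h2
    by_cases hnd : q.dropLast.Nodup
    · exact ⟨q, hc, hcl, h2, hnd⟩
    · obtain ⟨l1, v, l2, l3, hsplit⟩ := dup_split hnd
      have hqne : q ≠ [] := by rintro rfl; simp at h2
      obtain ⟨w, hq'⟩ : ∃ w, q = (l1 ++ v :: l2 ++ v :: l3) ++ [w] :=
        ⟨q.getLast hqne, by rw [← hsplit, List.dropLast_append_getLast hqne]⟩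
      have hinfix : (v :: l2 ++ [v]) <:+: q := by
        refine ⟨l1, l3 ++ [w], ?_⟩
        rw [hq']
        simp [List.append_assoc]
      refine ih (v :: l2 ++ [v]) ?_ (hc.infix hinfix) ?_ (by simp)
      · have := congrArg List.length hq'
        simp at this ⊢
        omega
      · rw [List.getLast?_concat]; rfl

lemma arcsOf_nodup {V : Type*} {c : List V} (h : c.dropLast.Nodup) : (arcsOf c).Nodup := by
  have hm : (arcsOf c).map Prod.fst = c.dropLast := by
    apply List.ext_getElem (by simp [length_arcsOf])
    intro i h1 h2
    simp [getElem_arcsOf, List.getElem_dropLast]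
  exact (hm ▸ h).of_map _


/-- A closed walk all of whose arcs are seller-unprotected contradicts (A1). -/
lemma no_closed_walk {V : Type*} (A : Finset (V × V)) (f : V × V → V)
    (hA1 : ¬ ∃ p : List V, IsCycle A p ∧ ∀ a ∈ arcsOf p, f a ≠ a.1)
    (q : List V) (hc : q.Chain' (fun u v => (u, v) ∈ A ∧ f (u, v) ≠ u))
    (hcl : q.head? = q.getLast?) (h2 : 2 ≤ q.length) : False := by
  obtain ⟨c, hc', hcl', h2', hnd⟩ :=
    extract_cycle (fun u v => (u, v) ∈ A ∧ f (u, v) ≠ u) q.length q le_rfl hc hcl h2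
  refine hA1 ⟨c, ⟨hc'.imp (fun a b h => h.1), h2', hcl', arcsOf_nodup hnd⟩, ?_⟩
  intro a ha
  exact (chain'_iff_arcs.mp hc' a ha).2

lemma chain'_map_range {α : Type*} (R : α → α → Prop) (g : ℕ → α) (m : ℕ)
    (h : ∀ k, k + 1 < m → R (g k) (g (k+1))) : ((List.range m).map g).Chain' R := by
  show List.IsChain R _
  rw [List.isChain_map]
  cases m with
  | zero => simp
  | succ m => rw [List.isChain_range_succ]; intro k hk; exact h k (by omega)

lemma head?_map_range {α : Type*} (g : ℕ → α) {m : ℕ} (h : 0 < m) :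
    ((List.range m).map g).head? = some (g 0) := by
  rw [List.head?_eq_getElem?, List.getElem?_eq_getElem (by simpa using h)]
  simp

lemma getLast?_map_range {α : Type*} (g : ℕ → α) {m : ℕ} (h : 0 < m) :
    ((List.range m).map g).getLast? = some (g (m-1)) := by
  rw [List.getLast?_eq_getElem?, List.getElem?_eq_getElem (by simp; omega)]
  simp

/-- Theorem "simple paths to/from x" (a): a simple path starting at x whose last arc is
protected by x has all its arcs protected by x. -/
theorem stmt14 {V : Type*} [Fintype V] (A : Finset (V × V)) (f : V × V → V)
    (hA1 : ¬ ∃ p : List V, IsCycle A p ∧ ∀ a ∈ arcsOf p, f a ≠ a.1)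
    (hA2 : ∀ v x : V, x ≠ v → (∃ u, (u, v) ∈ A ∧ f (u, v) = x) →
      ∀ a ∈ A, (a.1 = v ∨ a.2 = v) → (f a = v ∨ f a = x))
    (hA3 : ∀ v x : V,
      (∃ u, (u, v) ∈ A ∧ f (u, v) = x) ↔ (∃ w, (v, w) ∈ A ∧ f (v, w) = x))
    (x : V) (p : List V) (hlen : 2 ≤ p.length)
    (hchain : p.Chain' (fun a b => (a, b) ∈ A)) (hnd : p.Nodup)
    (hhead : p.head? = some x)
    (a : V × V) (hlast : (arcsOf p).getLast? = some a) (hfa : f a = x) :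
    ∀ b ∈ arcsOf p, f b = x := by
  classical
  set n := p.length with hn
  set u : ℕ → V := fun i => p.getD i x with hudef
  have hugd : ∀ i (h : i < n), u i = p[i] := fun i h => List.getD_eq_getElem p x h
  have harc : ∀ i, i + 1 < n → (u i, u (i+1)) ∈ A := by
    intro i h
    have := chain'_iff_arcs.mp hchain (p[i]'(by omega), p[i+1]'h) (mem_arcsOf.mpr ⟨i, h, rfl⟩)
    rwa [hugd i (by omega), hugd (i+1) h]
  have inj : ∀ i j, i < n → j < n → u i = u j → i = j := by
    intro i j hi hj hij
    rw [hugd i hi, hugd j hj] at hij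
    exact (List.Nodup.getElem_inj_iff hnd).mp hij
  have hu0 : u 0 = x := by
    rw [List.head?_eq_getElem?, List.getElem?_eq_getElem (by omega)] at hhead
    rw [hugd 0 (by omega)]
    exact Option.some.inj hhead
  have hx1 : ∀ j, 1 ≤ j → j < n → u j ≠ x := by
    intro j h1 h2 hj
    have := inj j 0 h2 (by omega) (by rw [hu0]; exact hj)
    omega
  -- identify the last arc
  have ha : a = (u (n-2), u (n-1)) := by
    rw [List.getLast?_eq_getElem?, List.getElem?_eq_getElem (by rw [length_arcsOf]; omega),
      getElem_arcsOf] at hlast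
    have e1 : (arcsOf p).length - 1 = n - 2 := by rw [length_arcsOf]; omega
    have e2 : n - 2 + 1 = n - 1 := by omega
    simp only [e1, e2] at hlast
    rw [hugd (n-2) (by omega), hugd (n-1) (by omega)]
    exact (Option.some.inj hlast).symm
  have hfl : f (u (n-2), u (n-1)) = x := ha ▸ hfa
  -- reduce goal to indices
  suffices H : ∀ i, i + 1 < n → f (u i, u (i+1)) = x by
    intro b hb
    obtain ⟨i, h, rfl⟩ := mem_arcsOf.mp hb
    have := H i h
    rwa [hugd i (by omega), hugd (i+1) h] at this
  by_contra hcon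
  push_neg at hcon
  obtain ⟨i0, hi0, hfi0⟩ := hcon
  set P : ℕ → Prop := fun i => i + 1 < n ∧ f (u i, u (i+1)) ≠ x with hP
  set i := Nat.findGreatest P n with hi
  have hPi : P i := Nat.findGreatest_spec (m := i0) (by omega) ⟨hi0, hfi0⟩
  have hmax : ∀ j, i < j → j + 1 < n → f (u j, u (j+1)) = x := by
    intro j h1 h2
    by_contra hne
    exact Nat.findGreatest_is_greatest h1 (by omega) ⟨h2, hne⟩
  have hilt : i + 2 < n := by
    rcases Nat.lt_or_ge (i+2) n with h | h
    · exact h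
    · have h2 : i = n - 2 := by have := hPi.1; omega
      have : f (u i, u (i+1)) = x := by
        rw [h2, show n - 2 + 1 = n - 1 by omega]
        exact hfl
      exact absurd this hPi.2
  -- Step A
  have hfi : f (u i, u (i+1)) = u (i+1) := by
    have hout : f (u (i+1), u (i+2)) = x := hmax (i+1) (by omega) hilt
    have hin := (hA3 (u (i+1)) x).mpr ⟨u (i+2), harc (i+1) hilt, hout⟩
    have hxne : x ≠ u (i+1) := fun h => hx1 (i+1) (by omega) (by omega) h.symm
    rcases hA2 (u (i+1)) x hxne hin (u i, u (i+1)) (harc i (by omega)) (Or.inr rfl) with h | h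
    · exact h
    · exact absurd h hPi.2
  -- Step B
  have key : ∀ d, d ≤ i → ∀ k, k ≤ i - d → f (u (i-d), u (i-d+1)) ≠ u k := by
    intro d
    induction d with
    | zero =>
      intro _ k hk
      simp only [Nat.sub_zero]
      rw [hfi]
      intro h
      have := inj (i+1) k (by omega) (by omega) h
      omega
    | succ d ih =>
      intro hd k hk h
      have e1 : i - (d+1) + 1 = i - d := by omega
      rw [e1] at h
      have hne : u k ≠ u (i - d) := by
        intro he
        have := inj k (i-d) (by omega) (by omega) he
        omega
      have hmem : (u (i-(d+1)), u (i-d)) ∈ A := by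
        have := harc (i-(d+1)) (by omega)
        rwa [e1] at this
      have h2 := hA2 (u (i-d)) (u k) hne ⟨u (i-(d+1)), hmem, h⟩
        (u (i-d), u (i-d+1)) (harc (i-d) (by omega)) (Or.inl rfl)
      rcases h2 with h' | h'
      · exact ih (by omega) (i-d) le_rfl h'
      · exact ih (by omega) k (by omega) h'
  -- Step C
  have hsell : ∀ j, j + 1 < n → f (u j, u (j+1)) ≠ u j := by
    intro j hj
    rcases le_or_gt j i with h | h
    · have := key (i - j) (by omega) j (by omega)
      rwa [show i - (i - j) = j by omega] at this
    · rw [hmax j h hj]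
      intro he
      exact hx1 j (by omega) (by omega) he.symm
  -- Step D: the returning walk
  set Pv : V → Prop := fun v => ∃ u', (u', v) ∈ A ∧ f (u', v) = x with hPv
  have hPv0 : Pv (u (n-1)) := by
    refine ⟨u (n-2), ?_, hfl⟩
    have := harc (n-2) (by omega)
    rwa [show n - 2 + 1 = n - 1 by omega] at this
  have step : ∀ v : V, Pv v → ∃ w : V, ((v, w) ∈ A ∧ f (v, w) = x) ∧ Pv w := by
    intro v h
    obtain ⟨w, hw1, hw2⟩ := (hA3 v x).mp h
    exact ⟨w, ⟨hw1, hw2⟩, v, hw1, hw2⟩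
  set g : {v // Pv v} → {v // Pv v} :=
    fun t => ⟨(step t.1 t.2).choose, (step t.1 t.2).choose_spec.2⟩ with hg
  set t0 : {v // Pv v} := ⟨u (n-1), hPv0⟩ with ht0
  set w : ℕ → V := fun k => (g^[k] t0).1 with hw
  have hw0 : w 0 = u (n-1) := rfl
  have hwstep : ∀ k, (w k, w (k+1)) ∈ A ∧ f (w k, w (k+1)) = x := by
    intro k
    have h := (step (g^[k] t0).1 (g^[k] t0).2).choose_spec.1
    have e : w (k+1) = (step (g^[k] t0).1 (g^[k] t0).2).choose := by
      show (g^[k+1] t0).1 = _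
      rw [Function.iterate_succ_apply']
    rw [e]
    exact h
  obtain ⟨k, l, hklt, hwkl⟩ : ∃ k l, k < l ∧ w k = w l := by
    obtain ⟨k, l, h1, h2⟩ := Finite.exists_ne_map_eq_of_infinite w
    rcases h1.lt_or_gt with h | h
    exacts [⟨k, l, h, h2⟩, ⟨l, k, h, h2.symm⟩]
  by_cases hex : ∃ m, w m = x
  · -- the walk reaches x: close a cycle through p
    set m := Nat.find hex with hm'
    have hm : w m = x := Nat.find_spec hex
    have hmlt : ∀ j, j < m → w j ≠ x := fun j hj => Nat.find_min hex hj
    have hm1 : 1 ≤ m := by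
      by_contra h
      have h0 : m = 0 := by omega
      exact hx1 (n-1) (by omega) (by omega) (by rw [← hw0, ← h0]; exact hm)
    refine no_closed_walk A f hA1 (p ++ (List.range m).map (fun t => w (t+1))) ?_ ?_ ?_
    · refine List.IsChain.append ?_ ?_ ?_
      · apply chain'_iff_arcs.mpr
        intro b hb
        obtain ⟨j, hj, rfl⟩ := mem_arcsOf.mp hb
        rw [← hugd j (by omega), ← hugd (j+1) hj]
        exact ⟨harc j hj, hsell j hj⟩
      · refine chain'_map_range _ _ _ ?_
        intro t ht
        refine ⟨(hwstep (t+1)).1, ?_⟩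
        rw [(hwstep (t+1)).2]
        exact fun he => hmlt (t+1) (by omega) he.symm
      · intro y hy z hz
        have hyv : y = u (n-1) := by
          rw [List.getLast?_eq_getElem?, List.getElem?_eq_getElem (by omega),
            ← hugd (n-1) (by omega)] at hy
          exact (Option.some.inj hy).symm
        have hzv : z = w 1 := by
          rw [head?_map_range _ hm1] at hz
          exact (Option.some.inj hz).symm
        subst hyv hzv
        rw [← hw0]
        refine ⟨(hwstep 0).1, ?_⟩
        rw [(hwstep 0).2, hw0]
        exact fun he => hx1 (n-1) (by omega) (by omega) he.symm
    · have h1 : x ∈ (p ++ (List.range m).map (fun t => w (t+1))).head? :=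
        List.mem_head?_append_of_mem_head? (by rw [Option.mem_def, hhead])
      have h2' := getLast?_map_range (fun t => w (t+1)) hm1
      rw [show m - 1 + 1 = m by omega, hm] at h2'
      have h2 : x ∈ (p ++ (List.range m).map (fun t => w (t+1))).getLast? :=
        List.mem_getLast?_append_of_mem_getLast? (by rw [Option.mem_def, h2'])
      rw [Option.mem_def] at h1 h2
      rw [h1, h2]
    · simp
      omega
  · -- the walk never reaches x: cycle among the w's
    push_neg at hex
    refine no_closed_walk A f hA1 ((List.range (l - k + 1)).map (fun t => w (k + t))) ?_ ?_ ?_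
    · refine chain'_map_range _ _ _ ?_
      intro t ht
      refine ⟨(hwstep (k+t)).1, ?_⟩
      show f (w (k+t), w (k+t+1)) ≠ w (k+t)
      rw [(hwstep (k+t)).2]
      exact fun he => hex (k+t) he.symm
    · rw [head?_map_range _ (by omega), getLast?_map_range _ (by omega)]
      rw [show l - k + 1 - 1 = l - k by omega, show k + (l - k) = l by omega]
      rw [show k + 0 = k from rfl, hwkl]
    · simp
      omega
end

section
/- Let G be a finite strongly connected digraph with protector labeling f satisfying: (A1) every cycle contains a seller-protected arc; (A2) unique external protector per vertex; (A3) in/out protector matching per vertex; and the path-propagation properties (every simple path from b protected-at-the-end by b is entirely b-protected, and symmetrically). Fix a protector vertex b and let G_b be the subgraph induced by the arcs protected by b. Then G_b is strongly connected and every directed cycle of G_b contains b; i.e., G_b is a bottleneck digraph with bottleneck b. -/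
section Aux

variable {V : Type*}

lemma arcsOf_cons_cons (a c : V) (t : List V) :
    arcsOf (a :: c :: t) = (a, c) :: arcsOf (c :: t) := rfl

lemma chain'_arcs {R : V → V → Prop} : ∀ p : List V, p.Chain' R → ∀ a ∈ arcsOf p, R a.1 a.2 := by
  intro p
  induction p with
  | nil => intro _ a ha; simp [arcsOf] at ha
  | cons x t ih =>
    cases t with
    | nil => intro _ a ha; simp [arcsOf] at ha
    | cons y s =>
      intro hch a ha
      rw [arcsOf_cons_cons] at ha
      rcases List.mem_cons.mp ha with h | h
      · subst h; exact (List.isChain_cons_cons.mp hch).1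
      · exact ih (List.isChain_cons_cons.mp hch).2 a h

lemma arcsOf_map_fst : ∀ p : List V, (arcsOf p).map Prod.fst = p.dropLast := by
  intro p
  induction p with
  | nil => rfl
  | cons x t ih =>
    cases t with
    | nil => rfl
    | cons y s =>
      rw [arcsOf_cons_cons, List.map_cons, ih]
      rfl

lemma exists_dup_decomp : ∀ l : List V, ¬ l.Nodup →
    ∃ (x : V) (l1 l2 l3 : List V), l = l1 ++ x :: l2 ++ x :: l3 := by
  intro l
  induction l with
  | nil => intro h; exact absurd List.nodup_nil h
  | cons a t ih =>
    intro h
    by_cases ha : a ∈ t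
    · obtain ⟨s, r, rfl⟩ := List.append_of_mem ha
      exact ⟨a, [], s, r, by simp⟩
    · have ht : ¬ t.Nodup := fun hn => h (List.nodup_cons.mpr ⟨ha, hn⟩)
      obtain ⟨x, l1, l2, l3, rfl⟩ := ih ht
      exact ⟨x, a :: l1, l2, l3, by simp⟩

lemma reach_of_mem_head {R : V → V → Prop} :
    ∀ p : List V, p.Chain' R → ∀ u, p.head? = some u → ∀ x ∈ p, Relation.ReflTransGen R u x := by
  intro p
  induction p with
  | nil => intro _ u hu; simp at hu
  | cons a t ih =>
    intro hch u hu x hx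
    have hau : a = u := by simpa using hu
    subst hau
    rcases List.mem_cons.mp hx with rfl | hx
    · exact Relation.ReflTransGen.refl
    · cases t with
      | nil => simp at hx
      | cons c s =>
        exact Relation.ReflTransGen.head (List.isChain_cons_cons.mp hch).1
          (ih (List.isChain_cons_cons.mp hch).2 c rfl x hx)

lemma reach_to_last {R : V → V → Prop} :
    ∀ p : List V, p.Chain' R → ∀ v, p.getLast? = some v → ∀ x ∈ p, Relation.ReflTransGen R x v := by
  intro p
  induction p with
  | nil => intro _ v hv; simp at hv
  | cons a t ih =>
    intro hch v hv x hx
    cases t with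
    | nil =>
      have hav : a = v := by simpa using hv
      have hxa : x = a := by simpa using hx
      subst hav; subst hxa
      exact Relation.ReflTransGen.refl
    | cons c s =>
      rw [List.getLast?_cons_cons] at hv
      rcases List.mem_cons.mp hx with rfl | hx
      · exact Relation.ReflTransGen.head (List.isChain_cons_cons.mp hch).1
          (ih (List.isChain_cons_cons.mp hch).2 v hv c List.mem_cons_self)
      · exact ih (List.isChain_cons_cons.mp hch).2 v hv x hx

end Aux

/-- Each component G_b of the protector decomposition is a strongly connected bottleneck
digraph with bottleneck b. -/
theorem stmt19 {V : Type*} [Fintype V] (A : Finset (V × V)) (f : V × V → V)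
    (hsc : ∀ u v : V, Relation.ReflTransGen (fun a b => (a, b) ∈ A) u v)
    (hA1 : ∀ p : List V, IsCycle A p → ∃ a ∈ arcsOf p, f a = a.1)
    (hA2 : ∀ v x : V, x ≠ v → (∃ u, (u, v) ∈ A ∧ f (u, v) = x) →
      ∀ a ∈ A, (a.1 = v ∨ a.2 = v) → (f a = v ∨ f a = x))
    (hA3 : ∀ v x : V,
      (∃ u, (u, v) ∈ A ∧ f (u, v) = x) ↔ (∃ w, (v, w) ∈ A ∧ f (v, w) = x))
    (hprop1 : ∀ x : V, ∀ p : List V, p.Chain' (fun a b => (a, b) ∈ A) → p.Nodup →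
      p.head? = some x → (∀ a : V × V, (arcsOf p).getLast? = some a → f a = x) →
      ∀ b ∈ arcsOf p, f b = x)
    (hprop2 : ∀ x : V, ∀ p : List V, p.Chain' (fun a b => (a, b) ∈ A) → p.Nodup →
      p.getLast? = some x → (∀ a : V × V, (arcsOf p).head? = some a → f a = x) →
      ∀ b ∈ arcsOf p, f b = x)
    (b : V) (hb : ∃ a ∈ A, f a = b) :
    (∀ u v : V,
      (∃ a ∈ A, f a = b ∧ (a.1 = u ∨ a.2 = u)) →
      (∃ a ∈ A, f a = b ∧ (a.1 = v ∨ a.2 = v)) →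
      Relation.ReflTransGen (fun s t => (s, t) ∈ A ∧ f (s, t) = b) u v) ∧
    (∀ p : List V, p.Chain' (fun s t => (s, t) ∈ A ∧ f (s, t) = b) →
      2 ≤ p.length → p.head? = p.getLast? → b ∈ p) := by
  classical
  set R : V → V → Prop := fun s t => (s, t) ∈ A ∧ f (s, t) = b with hRdef
  -- Part 2: every closed R-walk contains b
  have part2 : ∀ p : List V, p.Chain' R → 2 ≤ p.length → p.head? = p.getLast? → b ∈ p := by
    have key : ∀ n, ∀ p : List V, p.length ≤ n → p.Chain' R → 2 ≤ p.length →
        p.head? = p.getLast? → b ∈ p := by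
      intro n
      induction n with
      | zero => intro p hl _ h2 _; omega
      | succ n ih =>
        intro p hl hch h2 hcl
        by_cases hnd : p.dropLast.Nodup
        · -- p is a cycle
          have hcyc : IsCycle A p := by
            refine ⟨hch.imp (fun a c h => h.1), h2, hcl, ?_⟩
            rw [← arcsOf_map_fst p] at hnd
            exact hnd.of_map _
          obtain ⟨a, ha, hfa⟩ := hA1 p hcyc
          have hRa : R a.1 a.2 := chain'_arcs p hch a ha
          have hab : a.1 = b := by
            have : f (a.1, a.2) = b := hRa.2
            rw [← hfa]
            rw [Prod.mk.eta] at this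
            exact this
          have : a.1 ∈ p.dropLast := by
            rw [← arcsOf_map_fst p]
            exact List.mem_map_of_mem ha
          rw [hab] at this
          exact (List.dropLast_sublist p).subset this
        · -- there is a repeated vertex: extract a shorter closed walk
          obtain ⟨x, l1, l2, l3, hdec⟩ := exists_dup_decomp _ hnd
          have hinf : (x :: (l2 ++ [x])) <:+: p := by
            have h1 : (x :: (l2 ++ [x])) <:+: p.dropLast := ⟨l1, l3, by simp [hdec]⟩
            exact h1.trans (p.dropLast_prefix.isInfix)
          have hbmem : b ∈ x :: (l2 ++ [x]) := by
            apply ih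
            · have hle := hinf.length_le
              have := p.length_dropLast
              have h1 : (x :: (l2 ++ [x])).length ≤ p.dropLast.length := by
                have : p.dropLast = l1 ++ (x :: (l2 ++ [x])) ++ l3 := by simp [hdec]
                rw [this]; simp; omega
              omega
            · exact hch.infix hinf
            · simp
            · rw [show x :: (l2 ++ [x]) = (x :: l2) ++ [x] from rfl, List.getLast?_concat]
              rfl
          exact hinf.subset hbmem
    intro p; exact key p.length p le_rfl
  -- walk extension forward
  have extendF : ∀ v : V, (∃ w, R v w) → ∀ n, ∃ p : List V, p.Chain' R ∧
      p.head? = some v ∧ p.length = n + 1 ∧ ∃ z, p.getLast? = some z ∧ ∃ w, R z w := by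
    intro v hv n
    induction n with
    | zero => exact ⟨[v], List.isChain_singleton _, rfl, rfl, v, rfl, hv⟩
    | succ n ih =>
      obtain ⟨p, hch, hhd, hlen, z, hlast, w, hw⟩ := ih
      refine ⟨p ++ [w], ?_, ?_, by simp [hlen], w, List.getLast?_concat, ?_⟩
      · simp only [List.Chain']; rw [List.isChain_append]
        refine ⟨hch, List.isChain_singleton _, ?_⟩
        intro y hy y' hy'
        rw [hlast] at hy
        have h1 : z = y := by simpa using hy
        have h2 : w = y' := by simpa using hy'
        subst h1; subst h2
        exact hw
      · cases p with
        | nil => simp at hlen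
        | cons a t => simpa using hhd
      · exact (hA3 w b).mp ⟨z, hw.1, hw.2⟩
  -- walk extension backward
  have extendB : ∀ v : V, (∃ u, R u v) → ∀ n, ∃ p : List V, p.Chain' R ∧
      p.getLast? = some v ∧ p.length = n + 1 ∧ ∃ z, p.head? = some z ∧ ∃ u, R u z := by
    intro v hv n
    induction n with
    | zero => exact ⟨[v], List.isChain_singleton _, rfl, rfl, v, rfl, hv⟩
    | succ n ih =>
      obtain ⟨p, hch, hlast, hlen, z, hhd, u, hu⟩ := ih
      refine ⟨u :: p, ?_, ?_, by simp [hlen], u, rfl, (hA3 u b).mpr ⟨z, hu.1, hu.2⟩⟩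
      · simp only [List.Chain']; rw [List.isChain_cons]
        refine ⟨?_, hch⟩
        intro y hy
        rw [hhd] at hy
        have h1 : z = y := by simpa using hy
        subst h1
        exact hu
      · cases p with
        | nil => simp at hlen
        | cons c s => rw [List.getLast?_cons_cons]; exact hlast
  -- every vertex with a b-protected out-arc reaches b
  have reachB : ∀ v : V, (∃ w, R v w) → Relation.ReflTransGen R v b := by
    intro v hv
    obtain ⟨p, hch, hhd, hlen, _⟩ := extendF v hv (Fintype.card V)
    have hnd : ¬ p.Nodup := by
      intro h
      have := h.length_le_card
      omega
    obtain ⟨x, l1, l2, l3, hdec⟩ := exists_dup_decomp p hnd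
    have hinf : (x :: (l2 ++ [x])) <:+: p := ⟨l1, l3, by simp [hdec]⟩
    have hbmem : b ∈ x :: (l2 ++ [x]) := by
      apply part2 _ (hch.infix hinf) (by simp)
      rw [show x :: (l2 ++ [x]) = (x :: l2) ++ [x] from rfl, List.getLast?_concat]
      rfl
    exact reach_of_mem_head p hch v hhd b (hinf.subset hbmem)
  -- b reaches every vertex with a b-protected in-arc
  have fromB : ∀ v : V, (∃ u, R u v) → Relation.ReflTransGen R b v := by
    intro v hv
    obtain ⟨p, hch, hlast, hlen, _⟩ := extendB v hv (Fintype.card V)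
    have hnd : ¬ p.Nodup := by
      intro h
      have := h.length_le_card
      omega
    obtain ⟨x, l1, l2, l3, hdec⟩ := exists_dup_decomp p hnd
    have hinf : (x :: (l2 ++ [x])) <:+: p := ⟨l1, l3, by simp [hdec]⟩
    have hbmem : b ∈ x :: (l2 ++ [x]) := by
      apply part2 _ (hch.infix hinf) (by simp)
      rw [show x :: (l2 ++ [x]) = (x :: l2) ++ [x] from rfl, List.getLast?_concat]
      rfl
    exact reach_to_last p hch v hlast b (hinf.subset hbmem)
  constructor
  · intro u v hu hv
    obtain ⟨a, haA, hfa, hcase⟩ := hu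
    obtain ⟨a', haA', hfa', hcase'⟩ := hv
    have hout : ∃ w, R u w := by
      rcases hcase with h | h
      · exact ⟨a.2, by rw [← h] at *; exact ⟨by rw [Prod.mk.eta]; exact haA,
          by rw [Prod.mk.eta]; exact hfa⟩⟩
      · exact (hA3 u b).mp ⟨a.1, by rw [← h] at *; rw [Prod.mk.eta]; exact haA,
          by rw [← h] at *; rw [Prod.mk.eta]; exact hfa⟩
    have hin : ∃ u', R u' v := by
      rcases hcase' with h | h
      · exact (hA3 v b).mpr ⟨a'.2, by rw [← h] at *; rw [Prod.mk.eta]; exact haA',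
          by rw [← h] at *; rw [Prod.mk.eta]; exact hfa'⟩
      · exact ⟨a'.1, by rw [← h] at *; exact ⟨by rw [Prod.mk.eta]; exact haA',
          by rw [Prod.mk.eta]; exact hfa'⟩⟩
    exact (reachB u hout).trans (fromB v hin)
  · exact part2
end
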